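/- Let L be a complete lattice that is an X-top lattice for some nonempty X ⊆ L \ {1}, and equip X with the Zariski-like topology. Assume X is coatomic, every element of X is completely strongly X-irreducible, and Max(X) is finite. Then Max(X) is a retract of X if and only if X has the pm-property. -/

import Mathlib

/-- The set of maximal elements of `X` in the order induced from `L`. -/
def maximalsIn {L : Type*} [CompleteLattice L] (X : Set L) : Set L :=
  {m | m ∈ X ∧ ∀ y ∈ X, m ≤ y → y = m}

/-- If `L` is an `X`-top complete lattice (`X` nonempty, `X ⊆ L \ {1}`, with the
Zariski-like topology whose closed sets are exactly the varieties
`V_X(a) = {x ∈ X | a ≤ x}`), `X` is coatomic, every element of `X` is completely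
strongly `X`-irreducible and `Max(X)` is finite, then `Max(X)` is a retract of
`X` if and only if `X` has the pm-property. -/
theorem stmt_3 {L : Type*} [CompleteLattice L] (X : Set L)
    (hne : X.Nonempty) (hXtop : ∀ x ∈ X, x ≠ ⊤)
    [TopologicalSpace ↥X]
    (hZar : ∀ C : Set ↥X, IsClosed C ↔ ∃ a : L, C = {x : ↥X | a ≤ (x : L)})
    (hcoatomic : ∀ x ∈ X, ∃ m ∈ maximalsIn X, x ≤ m)
    (hcsi : ∀ q ∈ X, ∀ A ⊆ X, sInf A ≤ q → ∃ a ∈ A, a ≤ q)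
    (hmaxfin : (maximalsIn X).Finite) :
    (∃ r : ↥X → ↥{m : ↥X | (m : L) ∈ maximalsIn X},
        Continuous r ∧ ∀ m : ↥{m : ↥X | (m : L) ∈ maximalsIn X}, r ↑m = m) ↔
      ∀ x ∈ X, ∃! m, m ∈ maximalsIn X ∧ x ≤ m := by
  constructor
  · rintro ⟨r, hrc, hrm⟩ x hx
    obtain ⟨m, hm, hxm⟩ := hcoatomic x hx
    refine ⟨m, ⟨hm, hxm⟩, ?_⟩
    set x' : ↥X := ⟨x, hx⟩ with hx'
    have key : ∀ m', m' ∈ maximalsIn X ∧ x ≤ m' → m' = ((r x' : ↥X) : L) := by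
      rintro m' ⟨hm', hxm'⟩
      set m'' : ↥{m : ↥X | (m : L) ∈ maximalsIn X} := ⟨⟨m', hm'.1⟩, hm'⟩ with hm''
      have h1 : (⟨m', hm'.1⟩ : ↥X) ∈ closure {x'} := by
        obtain ⟨a, ha⟩ := (hZar (closure {x'})).1 isClosed_closure
        have hax : a ≤ x := by
          have := subset_closure (s := {x'}) rfl
          rw [ha] at this; exact this
        rw [ha]; exact le_trans hax hxm'
      have h2 : r ⟨m', hm'.1⟩ ∈ closure (r '' {x'}) :=
        image_closure_subset_closure_image hrc ⟨_, h1, rfl⟩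
      have h2' : m'' ∈ closure {r x'} := by
        rw [Set.image_singleton] at h2
        rw [← hrm m'']
        exact h2
      have hC : IsClosed {y : ↥X | ((r x' : ↥X) : L) ≤ (y : L)} :=
        (hZar _).2 ⟨((r x' : ↥X) : L), rfl⟩
      have hsub : closure {(r x' : ↥X)} ⊆ {y : ↥X | ((r x' : ↥X) : L) ≤ (y : L)} :=
        closure_minimal (by rintro _ rfl; exact le_refl _) hC
      have h3 : (m'' : ↥X) ∈ closure {(r x' : ↥X)} := by
        have := image_closure_subset_closure_image
          (continuous_subtype_val : Continuous ((↑) : ↥{m : ↥X | (m : L) ∈ maximalsIn X} → ↥X))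
          (s := {r x'}) ⟨m'', h2', rfl⟩
        rwa [Set.image_singleton] at this
      have h4 : ((r x' : ↥X) : L) ≤ m' := hsub h3
      exact (r x').2.2 m' hm'.1 h4
    intro y hy
    rw [key y hy, ← key m ⟨hm, hxm⟩]
  · intro hpm
    set f : ↥X → L := fun x => (hpm x x.2).choose with hf
    have hfP : ∀ x : ↥X, f x ∈ maximalsIn X ∧ (x : L) ≤ f x := fun x => (hpm x x.2).choose_spec.1
    have hiff : ∀ (x : ↥X) (μ : L), μ ∈ maximalsIn X → (f x = μ ↔ (x : L) ≤ μ) := by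
      intro x μ hμ
      constructor
      · rintro rfl; exact (hfP x).2
      · intro hle
        exact (hpm x x.2).unique (hfP x) ⟨hμ, hle⟩
    -- fibers are closed
    have hclosed : ∀ μ ∈ maximalsIn X, IsClosed {x : ↥X | (x : L) ≤ μ} := by
      intro μ hμ
      refine (hZar _).2 ⟨sInf {a | a ∈ X ∧ a ≤ μ}, ?_⟩
      ext x
      constructor
      · intro hx
        exact sInf_le ⟨x.2, hx⟩
      · intro hx
        obtain ⟨a, ⟨haX, haμ⟩, hax⟩ := hcsi x x.2 _ (fun a ha => ha.1) hx
        have h2 : f x = μ :=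
          (hpm a haX).unique ⟨(hfP x).1, le_trans hax (hfP x).2⟩ ⟨hμ, haμ⟩
        exact h2 ▸ (hfP x).2
    -- fibers are open
    have hopen : ∀ μ ∈ maximalsIn X, IsOpen {x : ↥X | (x : L) ≤ μ} := by
      intro μ hμ
      rw [← isClosed_compl_iff]
      have hcompl : {x : ↥X | (x : L) ≤ μ}ᶜ =
          ⋃ μ' ∈ maximalsIn X \ {μ}, {x : ↥X | (x : L) ≤ μ'} := by
        ext x
        simp only [Set.mem_compl_iff, Set.mem_setOf_eq, Set.mem_iUnion, Set.mem_diff,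
          Set.mem_singleton_iff]
        constructor
        · intro hnle
          refine ⟨f x, ⟨(hfP x).1, ?_⟩, (hfP x).2⟩
          rintro rfl
          exact hnle (hfP x).2
        · rintro ⟨μ', ⟨hμ', hne'⟩, hle'⟩ hle
          exact hne' (((hiff x μ' hμ').2 hle').symm.trans ((hiff x μ hμ).2 hle))
      rw [hcompl]
      exact (hmaxfin.diff : (maximalsIn X \ {μ}).Finite).isClosed_biUnion fun μ' hμ' => hclosed μ' hμ'.1
    refine ⟨fun x => ⟨⟨f x, (hfP x).1.1⟩, (hfP x).1⟩, ?_, ?_⟩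
    · refine Continuous.subtype_mk ?_ _
      rw [continuous_def]
      intro U hU
      have : (fun x : ↥X => (⟨f x, (hfP x).1.1⟩ : ↥X)) ⁻¹' U =
          ⋃ μ' ∈ {μ | ∃ h : μ ∈ maximalsIn X, (⟨μ, h.1⟩ : ↥X) ∈ U},
            {x : ↥X | (x : L) ≤ μ'} := by
        ext x
        simp only [Set.mem_preimage, Set.mem_iUnion, Set.mem_setOf_eq]
        constructor
        · intro hxU
          exact ⟨f x, ⟨(hfP x).1, hxU⟩, (hfP x).2⟩
        · rintro ⟨μ', ⟨hμ', hμ'U⟩, hle'⟩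
          have : f x = μ' := (hiff x μ' hμ').2 hle'
          have e : (⟨f x, (hfP x).1.1⟩ : ↥X) = ⟨μ', hμ'.1⟩ := Subtype.ext this
          rw [e]; exact hμ'U
      rw [this]
      exact isOpen_biUnion fun μ' hμ' => hopen μ' hμ'.1
    · intro m
      have hm : ((m : ↥X) : L) ∈ maximalsIn X := m.2
      have : f (↑m) = ((m : ↥X) : L) := (hiff _ _ hm).2 le_rfl
      exact Subtype.ext (Subtype.ext this)
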